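/- Let g be a natural number. The map sending (A₁, B₁, …, A_g, B_g) to the simultaneous-conjugation orbit of the tuple (A₁, B₁, …, A_g, B_g, 𝐢, 𝐣, −𝐤) is a bijection from the set {(A₁, B₁, …, A_g, B_g) ∈ Sp(1)^{2g} : ∏ₖ [Aₖ, Bₖ] = 1} onto the set of simultaneous-conjugation orbits of tuples (A₁, B₁, …, A_g, B_g, C₁, C₂, C₃) in which each Aₖ, Bₖ is a unit quaternion, each Cᵢ is a purely imaginary unit quaternion, ∏ₖ [Aₖ, Bₖ] · C₁C₂C₃ = 1, and ∏ₖ [Aₖ, Bₖ] = 1. (This identifies the locus {∏[Aₖ,Bₖ] = I} in the traceless character variety 𝓜_{g,3} with the unquotiented representation space Hom(π₁(Σ_g), SU(2)), the key step in proving L_α ∩ L_β ≅ Hom(π₁(Y), SU(2)).) -/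

import Mathlib

open Quaternion

noncomputable def qi : ℍ[ℝ] := ⟨0, 1, 0, 0⟩
noncomputable def qj : ℍ[ℝ] := ⟨0, 0, 1, 0⟩
noncomputable def qk : ℍ[ℝ] := ⟨0, 0, 0, 1⟩

lemma norm_qi : ‖qi‖ = 1 := by
  have h : ‖qi‖ * ‖qi‖ = 1 := by
    rw [← Quaternion.normSq_eq_norm_mul_self, Quaternion.normSq_def']; simp [qi]
  nlinarith [norm_nonneg qi]

lemma norm_qj : ‖qj‖ = 1 := by
  have h : ‖qj‖ * ‖qj‖ = 1 := by
    rw [← Quaternion.normSq_eq_norm_mul_self, Quaternion.normSq_def']; simp [qj]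
  nlinarith [norm_nonneg qj]

lemma norm_qk : ‖qk‖ = 1 := by
  have h : ‖qk‖ * ‖qk‖ = 1 := by
    rw [← Quaternion.normSq_eq_norm_mul_self, Quaternion.normSq_def']; simp [qk]
  nlinarith [norm_nonneg qk]

lemma re_qi : qi.re = 0 := rfl
lemma re_qj : qj.re = 0 := rfl
lemma re_qk : qk.re = 0 := rfl

lemma qi_mul_qj_mul_neg_qk : qi * qj * (-qk) = 1 := by
  ext <;> simp [Quaternion.re_mul, Quaternion.imI_mul, Quaternion.imJ_mul, Quaternion.imK_mul] <;> simp [qi, qj, qk]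

/-- Simultaneous conjugation by unit quaternions, as a relation on tuples of quaternions. -/
def uConj {ι : Type} (x y : ι → ℍ[ℝ]) : Prop :=
  ∃ D : ℍ[ℝ], ‖D‖ = 1 ∧ ∀ k, y k = D * x k * D⁻¹

theorem uConj_equivalence (ι : Type) : Equivalence (@uConj ι) := by
  constructor
  · intro x
    exact ⟨1, norm_one, fun k => by simp⟩
  · rintro x y ⟨D, hD, h⟩
    have hD0 : D ≠ 0 := by
      intro h0; rw [h0, norm_zero] at hD; norm_num at hD
    refine ⟨D⁻¹, by rw [norm_inv, hD]; norm_num, fun k => ?_⟩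
    rw [h k, inv_inv]
    simp [mul_assoc, inv_mul_cancel₀ hD0, inv_mul_cancel_left₀ hD0]
  · rintro x y z ⟨D, hD, h⟩ ⟨E, hE, h'⟩
    refine ⟨E * D, by rw [norm_mul, hD, hE]; norm_num, fun k => ?_⟩
    rw [h' k, h k, mul_inv_rev]
    simp [mul_assoc]

/-- The setoid of simultaneous conjugation on tuples of quaternions. -/
def conjSetoid (ι : Type) : Setoid (ι → ℍ[ℝ]) := ⟨uConj, uConj_equivalence ι⟩

/-- The setoid of simultaneous conjugation restricted to a conjugation-invariant subset. -/
def conjSetoidOn {ι : Type} (S : Set (ι → ℍ[ℝ])) : Setoid S :=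
  (conjSetoid ι).comap Subtype.val

/-- The (ordered) product of commutators `∏ₖ [Aₖ, Bₖ]`. -/
noncomputable def commProd {g : ℕ} (A B : Fin g → ℍ[ℝ]) : ℍ[ℝ] :=
  (List.ofFn fun k => A k * B k * (A k)⁻¹ * (B k)⁻¹).prod

/-- The set of tuples `(A₁, B₁, …, A_g, B_g, C₁, C₂, C₃)` of unit quaternions with each `Cᵢ`
purely imaginary, `∏ₖ [Aₖ, Bₖ] ⬝ C₁C₂C₃ = 1` and `∏ₖ [Aₖ, Bₖ] = 1`. -/
def S6 (g : ℕ) : Set ((Fin g ⊕ Fin g) ⊕ Fin 3 → ℍ[ℝ]) :=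
  {x | (∀ k : Fin g, ‖x (Sum.inl (Sum.inl k))‖ = 1) ∧
    (∀ k : Fin g, ‖x (Sum.inl (Sum.inr k))‖ = 1) ∧
    (∀ j : Fin 3, ‖x (Sum.inr j)‖ = 1 ∧ (x (Sum.inr j)).re = 0) ∧
    commProd (fun k => x (Sum.inl (Sum.inl k))) (fun k => x (Sum.inl (Sum.inr k))) *
      (x (Sum.inr 0) * x (Sum.inr 1) * x (Sum.inr 2)) = 1 ∧
    commProd (fun k => x (Sum.inl (Sum.inl k))) (fun k => x (Sum.inl (Sum.inr k))) = 1}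

/-- The domain: pairs of `g`-tuples of unit quaternions with trivial product of commutators,
i.e. `Hom(π₁(Σ_g), SU(2))`. -/
def SurfaceRep (g : ℕ) : Type :=
  {AB : (Fin g → ℍ[ℝ]) × (Fin g → ℍ[ℝ]) //
    (∀ k, ‖AB.1 k‖ = 1) ∧ (∀ k, ‖AB.2 k‖ = 1) ∧ commProd AB.1 AB.2 = 1}

lemma mem_S6 {g : ℕ} (AB : SurfaceRep g) :
    Sum.elim (Sum.elim AB.val.1 AB.val.2) ![qi, qj, -qk] ∈ S6 g := by
  obtain ⟨hA, hB, hc⟩ := AB.property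
  refine ⟨fun k => hA k, fun k => hB k, fun j => ?_, ?_, ?_⟩
  · fin_cases j <;> simp [norm_qi, norm_qj, norm_qk, re_qi, re_qj, re_qk]
  · show commProd AB.val.1 AB.val.2 * (qi * qj * -qk) = 1
    rw [hc, qi_mul_qj_mul_neg_qk, one_mul]
  · exact hc

section H
lemma my_unit_ne_zero {D : ℍ[ℝ]} (h : ‖D‖ = 1) : D ≠ 0 := by
  intro h0; rw [h0, norm_zero] at h; norm_num at h

lemma my_sq_imag {p : ℍ[ℝ]} (hp : ‖p‖ = 1) (hre : p.re = 0) : p * p = -1 := by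
  have hs : star p = -p := by ext <;> simp [hre]
  have h1 : p * star p = ((normSq p : ℝ) : ℍ[ℝ]) := Quaternion.self_mul_star p
  have h2 : normSq p = 1 := by rw [Quaternion.normSq_eq_norm_mul_self, hp]; ring
  rw [hs, mul_neg, h2] at h1
  simpa using neg_eq_iff_eq_neg.mp h1

lemma my_imag_inv {p : ℍ[ℝ]} (hp : ‖p‖ = 1) (hre : p.re = 0) : p⁻¹ = -p :=
  inv_eq_of_mul_eq_one_right (by rw [mul_neg, my_sq_imag hp hre, neg_neg])

lemma my_conj_of_semicomm {D p t : ℍ[ℝ]} (hD : D ≠ 0) (h : D * p = t * D) :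
    D * p * D⁻¹ = t := by rw [h, mul_assoc, mul_inv_cancel₀ hD, mul_one]

lemma my_conj_mul {D : ℍ[ℝ]} (hD : D ≠ 0) (a b : ℍ[ℝ]) :
    D * (a * b) * D⁻¹ = (D * a * D⁻¹) * (D * b * D⁻¹) := by
  simp only [mul_assoc, inv_mul_cancel_left₀ hD]

lemma my_conj_inv {D : ℍ[ℝ]} (hD : D ≠ 0) (a : ℍ[ℝ]) :
    D * a⁻¹ * D⁻¹ = (D * a * D⁻¹)⁻¹ := by
  rw [mul_inv_rev, mul_inv_rev, inv_inv, mul_assoc]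

lemma my_conj_list_prod {D : ℍ[ℝ]} (hD : D ≠ 0) (l : List ℍ[ℝ]) :
    D * l.prod * D⁻¹ = (l.map (fun x => D * x * D⁻¹)).prod := by
  induction l with
  | nil => simp [mul_inv_cancel₀ hD]
  | cons a t ih =>
    simp only [List.prod_cons, List.map_cons]
    rw [my_conj_mul hD, ih]

lemma my_conj_commProd {g : ℕ} {D : ℍ[ℝ]} (hD : D ≠ 0) (A B : Fin g → ℍ[ℝ]) :
    commProd (fun k => D * A k * D⁻¹) (fun k => D * B k * D⁻¹)
      = D * commProd A B * D⁻¹ := by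
  rw [commProd, commProd, my_conj_list_prod hD, List.map_ofFn]
  refine congrArg List.prod (congrArg List.ofFn (funext fun k => ?_))
  simp only [Function.comp]
  rw [my_conj_mul hD, my_conj_mul hD, my_conj_mul hD, my_conj_inv hD, my_conj_inv hD]

lemma my_norm_conj {D : ℍ[ℝ]} (hD : D ≠ 0) (x : ℍ[ℝ]) : ‖D * x * D⁻¹‖ = ‖x‖ := by
  rw [norm_mul, norm_mul, norm_inv]
  have : ‖D‖ ≠ 0 := norm_ne_zero_iff.mpr hD
  field_simp

lemma my_re_mul_comm (a b : ℍ[ℝ]) : (a * b).re = (b * a).re := by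
  simp [Quaternion.re_mul]; ring

lemma my_re_conj {D : ℍ[ℝ]} (hD : D ≠ 0) (x : ℍ[ℝ]) : (D * x * D⁻¹).re = x.re := by
  rw [my_re_mul_comm, ← mul_assoc, inv_mul_cancel₀ hD, one_mul]

lemma my_smul_conj {r : ℝ} (hr : r ≠ 0) (D x : ℍ[ℝ]) :
    (r • D) * x * (r • D)⁻¹ = D * x * D⁻¹ := by
  rw [smul_inv₀, smul_mul_assoc, smul_mul_assoc, mul_smul_comm, smul_smul,
    mul_inv_cancel₀ hr, one_smul]

lemma my_step1 {p : ℍ[ℝ]} (hp : ‖p‖ = 1) (hre : p.re = 0) :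
    ∃ D : ℍ[ℝ], D ≠ 0 ∧ D * p * D⁻¹ = qi := by
  by_cases h : qi + p = 0
  · have hp' : p = -qi := eq_neg_of_add_eq_zero_right h
    have hj : (qj : ℍ[ℝ]) ≠ 0 := by
      intro h0
      have := congrArg QuaternionAlgebra.imJ h0
      simp [qj] at this
    exact ⟨qj, hj, my_conj_of_semicomm hj (by rw [hp']; ext <;> simp [Quaternion.re_mul, Quaternion.imI_mul, Quaternion.imJ_mul, Quaternion.imK_mul] <;> simp [qi, qj])⟩
  · refine ⟨qi + p, h, my_conj_of_semicomm h ?_⟩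
    have h2 := my_sq_imag hp hre
    have hqi : qi * qi = -1 := by ext <;> simp [Quaternion.re_mul, Quaternion.imI_mul, Quaternion.imJ_mul, Quaternion.imK_mul] <;> simp [qi]
    rw [add_mul, mul_add, h2, hqi, add_comm]

lemma my_step2 {q : ℍ[ℝ]} (hq : ‖q‖ = 1) (hre : q.re = 0) (hI : q.imI = 0) :
    ∃ E : ℍ[ℝ], E ≠ 0 ∧ E * qi * E⁻¹ = qi ∧ E * q * E⁻¹ = qj := by
  have hbc : q.imJ ^ 2 + q.imK ^ 2 = 1 := by
    have h2 : normSq q = 1 := by rw [Quaternion.normSq_eq_norm_mul_self, hq]; ring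
    rw [Quaternion.normSq_def'] at h2
    nlinarith [h2]
  by_cases h : q = -qj
  · have hi : (qi : ℍ[ℝ]) ≠ 0 := by
      intro h0
      have := congrArg QuaternionAlgebra.imI h0
      simp [qi] at this
    exact ⟨qi, hi, my_conj_of_semicomm hi rfl,
      my_conj_of_semicomm hi (by rw [h]; ext <;> simp [Quaternion.re_mul, Quaternion.imI_mul, Quaternion.imJ_mul, Quaternion.imK_mul] <;> simp [qi, qj])⟩
  · set E : ℍ[ℝ] := ⟨1 + q.imJ, -q.imK, 0, 0⟩ with hEdef
    have hE : E ≠ 0 := by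
      intro h0
      rw [Quaternion.ext_iff] at h0
      simp [hEdef] at h0
      apply h
      have hb : q.imJ = -1 := by linarith [h0.1]
      have hc : q.imK = 0 := h0.2
      ext <;> simp [hre, hI, hb, hc] <;> simp [qj]
    refine ⟨E, hE, my_conj_of_semicomm hE (by ext <;> simp [Quaternion.re_mul, Quaternion.imI_mul, Quaternion.imJ_mul, Quaternion.imK_mul] <;> simp [hEdef, qi]),
      my_conj_of_semicomm hE ?_⟩
    ext <;> simp [Quaternion.re_mul, Quaternion.imI_mul, Quaternion.imJ_mul, Quaternion.imK_mul] <;> simp [hEdef, qj, hre, hI] <;> nlinarith [hbc]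
end H

lemma my_frame {p q : ℍ[ℝ]} (hp : ‖p‖ = 1) (hq : ‖q‖ = 1) (hpre : p.re = 0)
    (hqre : q.re = 0) (hpq : (p * q).re = 0) :
    ∃ D : ℍ[ℝ], ‖D‖ = 1 ∧ D * p * D⁻¹ = qi ∧ D * q * D⁻¹ = qj := by
  obtain ⟨D₁, hD₁, hD₁p⟩ := my_step1 hp hpre
  have hq₁n : ‖D₁ * q * D₁⁻¹‖ = 1 := by rw [my_norm_conj hD₁, hq]
  have hq₁re : (D₁ * q * D₁⁻¹).re = 0 := by rw [my_re_conj hD₁, hqre]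
  have hq₁I : (D₁ * q * D₁⁻¹).imI = 0 := by
    have h1 : (qi * (D₁ * q * D₁⁻¹)).re = 0 := by
      rw [← hD₁p, ← my_conj_mul hD₁, my_re_conj hD₁, hpq]
    have h2 : (qi * (D₁ * q * D₁⁻¹)).re = -(D₁ * q * D₁⁻¹).imI := by
      simp [Quaternion.re_mul, Quaternion.imI_mul, Quaternion.imJ_mul, Quaternion.imK_mul] <;> simp [qi]
    linarith [h1, h2]
  obtain ⟨E, hE, hEi, hEq⟩ := my_step2 hq₁n hq₁re hq₁I
  have hD₀ : E * D₁ ≠ 0 := mul_ne_zero hE hD₁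
  have hcomp : ∀ x : ℍ[ℝ], (E * D₁) * x * (E * D₁)⁻¹ = E * (D₁ * x * D₁⁻¹) * E⁻¹ := by
    intro x
    rw [mul_inv_rev]
    simp only [mul_assoc]
  have hnrm : ‖E * D₁‖ ≠ 0 := norm_ne_zero_iff.mpr hD₀
  refine ⟨(‖E * D₁‖⁻¹ : ℝ) • (E * D₁), ?_, ?_, ?_⟩
  · rw [norm_smul, norm_inv, norm_norm, inv_mul_cancel₀ hnrm]
  · rw [my_smul_conj (inv_ne_zero hnrm), hcomp, hD₁p, hEi]
  · rw [my_smul_conj (inv_ne_zero hnrm), hcomp, hEq]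

/-- The map `(A₁, B₁, …, A_g, B_g) ↦ [(A₁, B₁, …, A_g, B_g, 𝐢, 𝐣, −𝐤)]` is a bijection from
`{∏ₖ [Aₖ, Bₖ] = 1} ⊆ Sp(1)^{2g}` onto the quotient of `S6 g` by simultaneous conjugation:
the locus `{∏ₖ [Aₖ, Bₖ] = I}` in `𝓜_{g,3}` is `Hom(π₁(Σ_g), SU(2))`. -/
theorem surface_locus_is_unquotiented_rep_space (g : ℕ) :
    Function.Bijective (fun AB : SurfaceRep g =>
      Quotient.mk (conjSetoidOn (S6 g))
        ⟨Sum.elim (Sum.elim AB.val.1 AB.val.2) ![qi, qj, -qk], mem_S6 AB⟩) := by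

  constructor
  · intro AB AB' h
    obtain ⟨D, hDn, hk⟩ := Quotient.exact h
    have hD0 : D ≠ 0 := my_unit_ne_zero hDn
    have h0 : qi = D * qi * D⁻¹ := by simpa using hk (Sum.inr 0)
    have h1 : qj = D * qj * D⁻¹ := by simpa using hk (Sum.inr 1)
    have hci : D * qi = qi * D := by
      calc D * qi = (D * qi * D⁻¹) * D := by
            rw [mul_assoc, inv_mul_cancel₀ hD0, mul_one]
        _ = qi * D := by rw [← h0]
    have hcj : D * qj = qj * D := by
      calc D * qj = (D * qj * D⁻¹) * D := by
            rw [mul_assoc, inv_mul_cancel₀ hD0, mul_one]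
        _ = qj * D := by rw [← h1]
    rw [Quaternion.ext_iff] at hci hcj
    simp [Quaternion.re_mul, Quaternion.imI_mul, Quaternion.imJ_mul, Quaternion.imK_mul] at hci hcj
    simp [qi, qj] at hci hcj
    have hJ : D.imJ = 0 := by
      have := hci.2
      linarith
    have hK : D.imK = 0 := by
      have := hci.1
      linarith
    have hI : D.imI = 0 := by
      have := hcj.2
      linarith
    have hDre : D = ((D.re : ℝ) : ℍ[ℝ]) := by ext <;> simp [hI, hJ, hK]
    have hfix : ∀ x : ℍ[ℝ], D * x * D⁻¹ = x := by
      intro x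
      have hre0 : ((D.re : ℝ) : ℍ[ℝ]) ≠ 0 := hDre ▸ hD0
      calc D * x * D⁻¹ = ((D.re : ℝ) : ℍ[ℝ]) * x * (((D.re : ℝ) : ℍ[ℝ]))⁻¹ := by
            rw [← hDre]
        _ = x * ((D.re : ℝ) : ℍ[ℝ]) * (((D.re : ℝ) : ℍ[ℝ]))⁻¹ := by
            rw [Quaternion.coe_commutes]
        _ = x := by rw [mul_assoc, mul_inv_cancel₀ hre0, mul_one]
    have heq : ∀ k, (Sum.elim (Sum.elim AB'.val.1 AB'.val.2) ![qi, qj, -qk]) k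
        = (Sum.elim (Sum.elim AB.val.1 AB.val.2) ![qi, qj, -qk]) k := fun k => by
      have hk' : (Sum.elim (Sum.elim AB'.val.1 AB'.val.2) ![qi, qj, -qk]) k
          = D * (Sum.elim (Sum.elim AB.val.1 AB.val.2) ![qi, qj, -qk]) k * D⁻¹ := hk k
      rw [hk', hfix]
    apply Subtype.ext
    exact Prod.ext (funext fun k => (heq (Sum.inl (Sum.inl k))).symm)
      (funext fun k => (heq (Sum.inl (Sum.inr k))).symm)
  · intro c
    induction c using Quotient.ind with
    | _ s =>
      obtain ⟨x, hx⟩ := s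
      obtain ⟨hA, hB, hC, hrel, hcomm⟩ := hx
      have hC012 : x (Sum.inr 0) * x (Sum.inr 1) * x (Sum.inr 2) = 1 := by
        rw [hcomm, one_mul] at hrel; exact hrel
      have hpq : (x (Sum.inr 0) * x (Sum.inr 1)).re = 0 := by
        have h2 : x (Sum.inr 0) * x (Sum.inr 1) = (x (Sum.inr 2))⁻¹ :=
          eq_inv_of_mul_eq_one_left hC012
        rw [h2, my_imag_inv (hC 2).1 (hC 2).2]
        simp [(hC 2).2]
      obtain ⟨D, hDn, hDp, hDq⟩ := my_frame (hC 0).1 (hC 1).1 (hC 0).2 (hC 1).2 hpq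
      have hD0 : D ≠ 0 := my_unit_ne_zero hDn
      have hC2 : D * x (Sum.inr 2) * D⁻¹ = -qk := by
        have h3 : qi * qj * (D * x (Sum.inr 2) * D⁻¹) = 1 := by
          rw [← hDp, ← hDq, ← my_conj_mul hD0, ← my_conj_mul hD0, hC012,
            mul_one, mul_inv_cancel₀ hD0]
        have h4 : qi * qj = qk := by ext <;> simp [Quaternion.re_mul, Quaternion.imI_mul, Quaternion.imJ_mul, Quaternion.imK_mul] <;> simp [qi, qj, qk]
        rw [h4] at h3
        have h5 : D * x (Sum.inr 2) * D⁻¹ = qk⁻¹ := eq_inv_of_mul_eq_one_right h3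
        rw [h5, my_imag_inv norm_qk re_qk]
      refine ⟨⟨⟨fun k => D * x (Sum.inl (Sum.inl k)) * D⁻¹,
        fun k => D * x (Sum.inl (Sum.inr k)) * D⁻¹⟩,
        fun k => by rw [my_norm_conj hD0, hA k],
        fun k => by rw [my_norm_conj hD0, hB k],
        by rw [my_conj_commProd hD0, hcomm, mul_one, mul_inv_cancel₀ hD0]⟩, ?_⟩
      apply Quotient.sound
      refine ⟨D⁻¹, by rw [norm_inv, hDn]; norm_num, fun k => ?_⟩
      have htup : (Sum.elim (Sum.elim
          (fun k => D * x (Sum.inl (Sum.inl k)) * D⁻¹)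
          (fun k => D * x (Sum.inl (Sum.inr k)) * D⁻¹)) ![qi, qj, -qk]) k
          = D * x k * D⁻¹ := by
        rcases k with (k | k) | j
        · rfl
        · rfl
        · fin_cases j
          · simpa using hDp.symm
          · simpa using hDq.symm
          · simpa using hC2.symm
      show x k = D⁻¹ * (Sum.elim (Sum.elim
          (fun k => D * x (Sum.inl (Sum.inl k)) * D⁻¹)
          (fun k => D * x (Sum.inl (Sum.inr k)) * D⁻¹)) ![qi, qj, -qk]) k * D⁻¹⁻¹
      rw [inv_inv, htup]
      simp [mul_assoc, inv_mul_cancel₀ hD0, inv_mul_cancel_left₀ hD0]
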